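/- Let y(z) = ∏_{k=1}^n (z - ζ_k) with pairwise distinct ζ_k, let A be a monic polynomial of degree p+1 with simple roots disjoint from {ζ_1,...,ζ_n}, and let B, V be polynomials with deg B ≤ p, deg V ≤ p-1, such that A y'' + B y' = V y. Then for each k = 1, ..., n, the stationarity condition 2·∑_{j≠k} 1/(ζ_k - ζ_j) + B(ζ_k)/A(ζ_k) = 0 holds. -/

import Mathlib

open Polynomial Finset

lemma deriv_prod_aux {ι : Type*} [DecidableEq ι] (s : Finset ι) (g : ι → Polynomial ℂ)
    (hg : ∀ i, Polynomial.derivative (g i) = 1) :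
    Polynomial.derivative (∏ i ∈ s, g i) = ∑ i ∈ s, ∏ j ∈ s.erase i, g j := by
  induction s using Finset.induction_on with
  | empty => simp
  | @insert a s ha ih =>
    rw [Finset.prod_insert ha, Polynomial.derivative_mul, hg, ih, Finset.sum_insert ha,
      Finset.erase_insert ha, one_mul, Finset.mul_sum]
    congr 1
    refine Finset.sum_congr rfl (fun i hi => ?_)
    rw [Finset.erase_insert_of_ne (by rintro rfl; exact ha hi), Finset.prod_insert
      (fun h => ha (Finset.mem_of_mem_erase h))]

theorem stmt_5 (p n : ℕ) (a : Fin (p + 1) → ℂ) (ha : Function.Injective a)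
    (ζ : Fin n → ℂ) (hζ : Function.Injective ζ) (hζa : ∀ k m, ζ k ≠ a m)
    (A B V : Polynomial ℂ) (hA : A = ∏ i, (Polynomial.X - Polynomial.C (a i)))
    (hB : B.degree ≤ p) (hV : V.degree ≤ (p - 1 : ℕ))
    (heq : A * Polynomial.derivative
        (Polynomial.derivative (∏ k, (Polynomial.X - Polynomial.C (ζ k))))
        + B * Polynomial.derivative (∏ k, (Polynomial.X - Polynomial.C (ζ k)))
      = V * ∏ k, (Polynomial.X - Polynomial.C (ζ k))) :
    ∀ k : Fin n,
      2 * ∑ j ∈ Finset.univ.erase k, 1 / (ζ k - ζ j)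
        + B.eval (ζ k) / A.eval (ζ k) = 0 := by
  intro k
  set y : Polynomial ℂ := ∏ k, (Polynomial.X - Polynomial.C (ζ k)) with hy
  have hAk : A.eval (ζ k) ≠ 0 := by
    rw [hA]
    simp only [Polynomial.eval_prod, Polynomial.eval_sub, Polynomial.eval_X, Polynomial.eval_C]
    exact Finset.prod_ne_zero_iff.mpr (fun m _ => sub_ne_zero.mpr (hζa k m))
  set P : ℂ := ∏ j ∈ Finset.univ.erase k, (ζ k - ζ j) with hP
  have hPne : P ≠ 0 := by
    apply Finset.prod_ne_zero_iff.mpr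
    intro j hj
    exact sub_ne_zero.mpr (fun h => (Finset.ne_of_mem_erase hj) (hζ h.symm))
  have hy' : Polynomial.derivative y
      = ∑ i, ∏ j ∈ Finset.univ.erase i, (Polynomial.X - Polynomial.C (ζ j)) := by
    rw [hy]
    exact deriv_prod_aux _ _ (by simp)
  have hy'k : (Polynomial.derivative y).eval (ζ k) = P := by
    rw [hy']
    simp only [Polynomial.eval_finset_sum, Polynomial.eval_prod, Polynomial.eval_sub,
      Polynomial.eval_X, Polynomial.eval_C]
    rw [Finset.sum_eq_single k]
    · intro i _ hik
      apply Finset.prod_eq_zero (Finset.mem_erase.mpr ⟨Ne.symm hik, Finset.mem_univ k⟩)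
      simp
    · simp
  have hy'' : Polynomial.derivative (Polynomial.derivative y)
      = ∑ i, ∑ j ∈ Finset.univ.erase i,
          ∏ l ∈ (Finset.univ.erase i).erase j, (Polynomial.X - Polynomial.C (ζ l)) := by
    rw [hy', map_sum]
    exact Finset.sum_congr rfl (fun i _ => deriv_prod_aux _ _ (by simp))
  have hterm : ∀ j ∈ Finset.univ.erase k,
      (∏ l ∈ (Finset.univ.erase k).erase j, (ζ k - ζ l)) = (ζ k - ζ j)⁻¹ * P := by
    intro j hj
    have h := Finset.mul_prod_erase _ (fun l => ζ k - ζ l) hj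
    have hne : ζ k - ζ j ≠ 0 :=
      sub_ne_zero.mpr (fun h => (Finset.ne_of_mem_erase hj) (hζ h.symm))
    rw [hP, ← h, inv_mul_cancel_left₀ hne]
  have hy''k : (Polynomial.derivative (Polynomial.derivative y)).eval (ζ k)
      = 2 * ∑ j ∈ Finset.univ.erase k, (ζ k - ζ j)⁻¹ * P := by
    rw [hy'']
    simp only [Polynomial.eval_finset_sum, Polynomial.eval_prod, Polynomial.eval_sub,
      Polynomial.eval_X, Polynomial.eval_C]
    rw [Finset.sum_eq_add_sum_sdiff_singleton_of_mem (Finset.mem_univ k)]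
    have h1 : ∑ j ∈ Finset.univ.erase k, ∏ l ∈ (Finset.univ.erase k).erase j, (ζ k - ζ l)
        = ∑ j ∈ Finset.univ.erase k, (ζ k - ζ j)⁻¹ * P :=
      Finset.sum_congr rfl hterm
    have h2 : ∑ i ∈ Finset.univ \ {k}, ∑ j ∈ Finset.univ.erase i,
        ∏ l ∈ (Finset.univ.erase i).erase j, (ζ k - ζ l)
        = ∑ i ∈ Finset.univ.erase k, (ζ k - ζ i)⁻¹ * P := by
      rw [Finset.sdiff_singleton_eq_erase]
      refine Finset.sum_congr rfl (fun i hi => ?_)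
      have hik : i ≠ k := Finset.ne_of_mem_erase hi
      have hk : k ∈ Finset.univ.erase i := Finset.mem_erase.mpr ⟨hik.symm, Finset.mem_univ k⟩
      rw [Finset.sum_eq_single k]
      · rw [Finset.erase_right_comm]
        exact hterm i hi
      · intro j hj hjk
        apply Finset.prod_eq_zero (Finset.mem_erase.mpr ⟨hjk.symm,
          Finset.mem_erase.mpr ⟨hik.symm, Finset.mem_univ k⟩⟩)
        simp
      · intro h; exact absurd hk h
    rw [h1, h2]
    ring
  have hyk : y.eval (ζ k) = 0 := by
    rw [hy]
    simp only [Polynomial.eval_prod, Polynomial.eval_sub, Polynomial.eval_X, Polynomial.eval_C]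
    exact Finset.prod_eq_zero (Finset.mem_univ k) (by simp)
  have heval := congrArg (Polynomial.eval (ζ k)) heq
  simp only [Polynomial.eval_add, Polynomial.eval_mul, ← hy, hy'k, hy''k, hyk, mul_zero] at heval
  have hfac : (A.eval (ζ k) * (2 * ∑ j ∈ Finset.univ.erase k, (ζ k - ζ j)⁻¹)
      + B.eval (ζ k)) * P = 0 := by
    have hs : ∑ j ∈ Finset.univ.erase k, (ζ k - ζ j)⁻¹ * P
        = (∑ j ∈ Finset.univ.erase k, (ζ k - ζ j)⁻¹) * P := (Finset.sum_mul _ _ _).symm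
    rw [← heval, hs]
    ring
  have hS : A.eval (ζ k) * (2 * ∑ j ∈ Finset.univ.erase k, (ζ k - ζ j)⁻¹)
      + B.eval (ζ k) = 0 := by
    rcases mul_eq_zero.mp hfac with h | h
    · exact h
    · exact absurd h hPne
  simp only [one_div]
  have hdiv : B.eval (ζ k) / A.eval (ζ k)
      = -(2 * ∑ j ∈ Finset.univ.erase k, (ζ k - ζ j)⁻¹) := by
    rw [div_eq_iff hAk]
    linear_combination hS
  rw [hdiv]
  ring
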